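/- Let C be a v×v real symmetric positive semidefinite matrix, let W be a v×v real symmetric positive semidefinite matrix of rank d whose column space is contained in the column space of C, and let K be a v×d real matrix of rank d with K Kᵀ = W. Then the largest weighted variance over all estimable functions weighted by W equals the reciprocal of the smallest eigenvalue of the weighted information matrix: sup over nonzero q in the column space of W of (qᵀ W⁺ q)^{−1} · (qᵀ C⁺ q) equals λ_min((Kᵀ C⁺ K)^{−1})^{−1} = λ_max(Kᵀ C⁺ K), and this supremum is attained. -/

import Mathlib

open Matrix

/-- The column space of a real matrix. -/
def colSpace {m n : ℕ} (A : Matrix (Fin m) (Fin n) ℝ) : Submodule ℝ (Fin m → ℝ) :=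
  LinearMap.range A.mulVecLin

/-- `B` is the Moore–Penrose pseudoinverse of `A`. -/
def IsMPInv {m n : ℕ} (A : Matrix (Fin m) (Fin n) ℝ) (B : Matrix (Fin n) (Fin m) ℝ) : Prop :=
  A * B * A = A ∧ B * A * B = B ∧ (A * B)ᵀ = A * B ∧ (B * A)ᵀ = B * A

section Aux

/-- Uniqueness of the Moore–Penrose pseudoinverse. -/
lemma mp_unique {m n : ℕ} {A : Matrix (Fin m) (Fin n) ℝ} {B B' : Matrix (Fin n) (Fin m) ℝ}
    (hB : IsMPInv A B) (hB' : IsMPInv A B') : B = B' := by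
  obtain ⟨h1, h2, h3, h4⟩ := hB
  obtain ⟨h1', h2', h3', h4'⟩ := hB'
  have hAB : A * B = A * B' := by
    calc A * B = (A * B)ᵀ := h3.symm
      _ = ((A * B' * A) * B)ᵀ := by rw [h1']
      _ = ((A * B') * (A * B))ᵀ := by rw [Matrix.mul_assoc (A * B') A B]
      _ = (A * B)ᵀ * (A * B')ᵀ := by rw [Matrix.transpose_mul]
      _ = (A * B) * (A * B') := by rw [h3, h3']
      _ = A * B * A * B' := by rw [Matrix.mul_assoc (A * B) A B']
      _ = A * B' := by rw [h1]
  have hBA : B * A = B' * A := by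
    calc B * A = (B * A)ᵀ := h4.symm
      _ = (B * (A * B' * A))ᵀ := by rw [h1']
      _ = ((B * A) * (B' * A))ᵀ := by simp only [Matrix.mul_assoc]
      _ = (B' * A)ᵀ * (B * A)ᵀ := by rw [Matrix.transpose_mul]
      _ = (B' * A) * (B * A) := by rw [h4, h4']
      _ = B' * (A * B * A) := by simp only [Matrix.mul_assoc]
      _ = B' * A := by rw [h1]
  calc B = B * A * B := h2.symm
    _ = B' * A * B := by rw [hBA]
    _ = B' * (A * B') := by rw [Matrix.mul_assoc, hAB]
    _ = B' := by rw [← Matrix.mul_assoc, h2']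

lemma mp_transpose {m n : ℕ} {A : Matrix (Fin m) (Fin n) ℝ} {B : Matrix (Fin n) (Fin m) ℝ}
    (hB : IsMPInv A B) : IsMPInv Aᵀ Bᵀ := by
  obtain ⟨h1, h2, h3, h4⟩ := hB
  refine ⟨?_, ?_, ?_, ?_⟩
  · have e : Aᵀ * Bᵀ * Aᵀ = (A * B * A)ᵀ := by
      simp only [Matrix.transpose_mul, Matrix.mul_assoc]
    rw [e, h1]
  · have e : Bᵀ * Aᵀ * Bᵀ = (B * A * B)ᵀ := by
      simp only [Matrix.transpose_mul, Matrix.mul_assoc]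
    rw [e, h2]
  · have e : Aᵀ * Bᵀ = (B * A)ᵀ := (Matrix.transpose_mul B A).symm
    rw [e, Matrix.transpose_transpose]
    exact h4.symm
  · have e : Bᵀ * Aᵀ = (A * B)ᵀ := (Matrix.transpose_mul A B).symm
    rw [e, Matrix.transpose_transpose]
    exact h3.symm

lemma dp_self_pos {n : Type*} [Fintype n] {y : n → ℝ} (hy : y ≠ 0) : 0 < y ⬝ᵥ y := by
  have := dotProduct_star_self_pos_iff (R := ℝ) (v := y)
  simpa using this.mpr hy

lemma dot_pull {v d : ℕ} (K : Matrix (Fin v) (Fin d) ℝ) (B : Matrix (Fin v) (Fin v) ℝ)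
    (z : Fin d → ℝ) :
    (K *ᵥ z) ⬝ᵥ (B *ᵥ (K *ᵥ z)) = z ⬝ᵥ ((Kᵀ * B * K) *ᵥ z) := by
  rw [← Matrix.mulVec_mulVec z (Kᵀ * B) K, ← Matrix.mulVec_mulVec (K *ᵥ z) Kᵀ B,
    Matrix.dotProduct_mulVec z Kᵀ, Matrix.vecMul_transpose]

/-- Real spectral theorem, specialized form. -/
lemma real_spectral {n : Type*} [Fintype n] [DecidableEq n] {A : Matrix n n ℝ}
    (hA : A.IsHermitian) :
    A = (hA.eigenvectorUnitary : Matrix n n ℝ) * diagonal hA.eigenvalues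
        * star (hA.eigenvectorUnitary : Matrix n n ℝ) := by
  have := hA.spectral_theorem
  rwa [RCLike.ofReal_real_eq_id, Function.id_comp] at this

lemma rayleigh_upper {n : Type*} [Fintype n] [DecidableEq n] {A : Matrix n n ℝ}
    (hA : A.IsHermitian) {c : ℝ} (hc : ∀ i, hA.eigenvalues i ≤ c) (z : n → ℝ) :
    z ⬝ᵥ A *ᵥ z ≤ c * (z ⬝ᵥ z) := by
  set U : Matrix n n ℝ := (hA.eigenvectorUnitary : Matrix n n ℝ) with hUdef
  have hU : U * star U = 1 := mem_unitaryGroup_iff.mp hA.eigenvectorUnitary.2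
  have h1 : U * (c • (1 : Matrix n n ℝ)) * star U = c • (1 : Matrix n n ℝ) := by
    rw [Matrix.mul_smul, Matrix.mul_one, Matrix.smul_mul, hU]
  have h2 : c • (1 : Matrix n n ℝ) - A
      = U * diagonal (fun i => c - hA.eigenvalues i) * star U := by
    have hd : diagonal (fun i => c - hA.eigenvalues i)
        = c • (1 : Matrix n n ℝ) - diagonal hA.eigenvalues := by
      rw [← Matrix.diagonal_sub, Matrix.smul_one_eq_diagonal]
    rw [hd, Matrix.mul_sub, Matrix.sub_mul, h1, ← real_spectral hA]
  have hpsd : (c • (1 : Matrix n n ℝ) - A).PosSemidef := by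
    rw [h2]
    have hdg : (diagonal (fun i => c - hA.eigenvalues i)).PosSemidef :=
      Matrix.posSemidef_diagonal_iff.mpr fun i => sub_nonneg.mpr (hc i)
    have := hdg.mul_mul_conjTranspose_same U
    rwa [← Matrix.star_eq_conjTranspose] at this
  have h0 := hpsd.dotProduct_mulVec_nonneg z
  rw [star_trivial, Matrix.sub_mulVec, Matrix.smul_mulVec, Matrix.one_mulVec,
    dotProduct_sub, dotProduct_smul, smul_eq_mul] at h0
  linarith

lemma rayleigh_lower {n : Type*} [Fintype n] [DecidableEq n] {A : Matrix n n ℝ}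
    (hA : A.IsHermitian) {c : ℝ} (hc : ∀ i, c ≤ hA.eigenvalues i) (z : n → ℝ) :
    c * (z ⬝ᵥ z) ≤ z ⬝ᵥ A *ᵥ z := by
  set U : Matrix n n ℝ := (hA.eigenvectorUnitary : Matrix n n ℝ) with hUdef
  have hU : U * star U = 1 := mem_unitaryGroup_iff.mp hA.eigenvectorUnitary.2
  have h1 : U * (c • (1 : Matrix n n ℝ)) * star U = c • (1 : Matrix n n ℝ) := by
    rw [Matrix.mul_smul, Matrix.mul_one, Matrix.smul_mul, hU]
  have h2 : A - c • (1 : Matrix n n ℝ)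
      = U * diagonal (fun i => hA.eigenvalues i - c) * star U := by
    have hd : diagonal (fun i => hA.eigenvalues i - c)
        = diagonal hA.eigenvalues - c • (1 : Matrix n n ℝ) := by
      rw [← Matrix.diagonal_sub, Matrix.smul_one_eq_diagonal]
    rw [hd, Matrix.mul_sub, Matrix.sub_mul, h1, ← real_spectral hA]
  have hpsd : (A - c • (1 : Matrix n n ℝ)).PosSemidef := by
    rw [h2]
    have hdg : (diagonal (fun i => hA.eigenvalues i - c)).PosSemidef :=
      Matrix.posSemidef_diagonal_iff.mpr fun i => sub_nonneg.mpr (hc i)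
    have := hdg.mul_mul_conjTranspose_same U
    rwa [← Matrix.star_eq_conjTranspose] at this
  have h0 := hpsd.dotProduct_mulVec_nonneg z
  rw [star_trivial, Matrix.sub_mulVec, Matrix.smul_mulVec, Matrix.one_mulVec,
    dotProduct_sub, dotProduct_smul, smul_eq_mul] at h0
  linarith

end Aux

theorem stmt8 (v d : ℕ) (hd : 0 < d) (C W : Matrix (Fin v) (Fin v) ℝ)
    (hC : C.PosSemidef) (hW : W.PosSemidef)
    (hWrank : W.rank = d) (hcol : colSpace W ≤ colSpace C)
    (K : Matrix (Fin v) (Fin d) ℝ) (hKrank : K.rank = d) (hKW : K * Kᵀ = W)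
    (Cp Wp : Matrix (Fin v) (Fin v) ℝ) (hCp : IsMPInv C Cp) (hWp : IsMPInv W Wp) :
    ∃ hPD : (Kᵀ * Cp * K).PosDef,
      ((⨅ i, (Matrix.IsHermitian.inv hPD.1).eigenvalues i)⁻¹ = ⨆ i, hPD.1.eigenvalues i) ∧
        IsGreatest
          {x : ℝ | ∃ q : Fin v → ℝ, q ∈ colSpace W ∧ q ≠ 0 ∧
            x = (q ⬝ᵥ Wp *ᵥ q)⁻¹ * (q ⬝ᵥ Cp *ᵥ q)}
          (⨆ i, hPD.1.eigenvalues i) := by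
  haveI : Nonempty (Fin d) := Fin.pos_iff_nonempty.mp hd
  have hCsym : Cᵀ = C := by
    have h : Cᴴ = C := hC.1
    rwa [Matrix.conjTranspose_eq_transpose_of_trivial] at h
  -- Cp is symmetric
  have hCpT : Cpᵀ = Cp := by
    have h1 : IsMPInv C Cpᵀ := by
      have := mp_transpose hCp
      rwa [hCsym] at this
    exact mp_unique h1 hCp
  -- Cp is positive semidefinite
  have hCpPSD : Cp.PosSemidef := by
    have := hC.mul_mul_conjTranspose_same Cp
    rwa [Matrix.conjTranspose_eq_transpose_of_trivial, hCpT, hCp.2.1] at this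
  -- K has trivial kernel
  have hkerK : LinearMap.ker K.mulVecLin = ⊥ := by
    have h := LinearMap.finrank_range_add_finrank_ker K.mulVecLin
    have hr : Module.finrank ℝ (LinearMap.range K.mulVecLin) = d := hKrank
    have hdom : Module.finrank ℝ (Fin d → ℝ) = d := by simp
    rw [hr, hdom] at h
    have h0 : Module.finrank ℝ (LinearMap.ker K.mulVecLin) = 0 := by omega
    exact Submodule.finrank_eq_zero.mp h0
  have hKinj : ∀ z : Fin d → ℝ, K *ᵥ z = 0 → z = 0 := by
    intro z hz
    have hmem : z ∈ LinearMap.ker K.mulVecLin := by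
      simpa [Matrix.mulVecLin_apply] using hz
    rw [hkerK] at hmem
    simpa using hmem
  -- Kᵀ * K is positive definite
  have hT : (Kᵀ * K).PosDef := by
    refine Matrix.PosDef.of_dotProduct_mulVec_pos ?_ (fun x hx => ?_)
    · show (Kᵀ * K)ᴴ = Kᵀ * K
      rw [Matrix.conjTranspose_eq_transpose_of_trivial, Matrix.transpose_mul,
        Matrix.transpose_transpose]
    · have he : star x ⬝ᵥ (Kᵀ * K) *ᵥ x = (K *ᵥ x) ⬝ᵥ (K *ᵥ x) := by
        rw [star_trivial, ← Matrix.mulVec_mulVec x Kᵀ K, Matrix.dotProduct_mulVec x Kᵀ,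
          Matrix.vecMul_transpose]
      rw [he]
      exact dp_self_pos (fun h => hx (hKinj x h))
  set G : Matrix (Fin d) (Fin d) ℝ := (Kᵀ * K)⁻¹ with hGdef
  have hdet : IsUnit (Kᵀ * K).det := isUnit_iff_ne_zero.mpr hT.det_pos.ne'
  have hTG : (Kᵀ * K) * G = 1 := Matrix.mul_nonsing_inv _ hdet
  have hGT : G * (Kᵀ * K) = 1 := Matrix.nonsing_inv_mul _ hdet
  have hGsym : Gᵀ = G := by
    calc Gᵀ = ((Kᵀ * K)ᵀ)⁻¹ := Matrix.transpose_nonsing_inv _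
      _ = G := by rw [Matrix.transpose_mul, Matrix.transpose_transpose]
  have hTG' : ∀ (p : ℕ) (X : Matrix (Fin d) (Fin p) ℝ), Kᵀ * (K * (G * X)) = X := by
    intro p X
    calc Kᵀ * (K * (G * X)) = ((Kᵀ * K) * G) * X := by simp only [Matrix.mul_assoc]
      _ = X := by rw [hTG, Matrix.one_mul]
  have hGT' : ∀ (p : ℕ) (X : Matrix (Fin d) (Fin p) ℝ), G * (Kᵀ * (K * X)) = X := by
    intro p X
    calc G * (Kᵀ * (K * X)) = ((G * (Kᵀ * K))) * X := by simp only [Matrix.mul_assoc]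
      _ = X := by rw [hGT, Matrix.one_mul]
  -- explicit pseudoinverse of W
  set Wq : Matrix (Fin v) (Fin v) ℝ := K * G * G * Kᵀ with hWq
  have hWWq : W * Wq = K * (G * Kᵀ) := by
    rw [← hKW, hWq]
    simp only [Matrix.mul_assoc]
    rw [hTG']
  have hWqW : Wq * W = K * (G * Kᵀ) := by
    rw [← hKW, hWq]
    simp only [Matrix.mul_assoc]
    rw [hGT']
  have hMP : IsMPInv W Wq := by
    refine ⟨?_, ?_, ?_, ?_⟩
    · rw [hWWq, ← hKW]
      simp only [Matrix.mul_assoc]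
      rw [hGT']
    · rw [hWqW, hWq]
      simp only [Matrix.mul_assoc]
      rw [hTG']
    · rw [hWWq]
      simp only [Matrix.transpose_mul, Matrix.transpose_transpose, hGsym, Matrix.mul_assoc]
    · rw [hWqW]
      simp only [Matrix.transpose_mul, Matrix.transpose_transpose, hGsym, Matrix.mul_assoc]
  have hWpWq : Wp = Wq := mp_unique hWp hMP
  have hKWpK : Kᵀ * Wp * K = 1 := by
    rw [hWpWq, hWq]
    simp only [Matrix.mul_assoc]
    rw [hTG']
    exact hGT
  -- column space facts
  have hKcol : ∀ z : Fin d → ℝ, K *ᵥ z ∈ colSpace W := by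
    intro z
    have hWKG : W * (K * G) = K := by
      rw [← hKW]
      simp only [Matrix.mul_assoc]
      rw [show Kᵀ * (K * G) = 1 from (Matrix.mul_assoc Kᵀ K G).symm.trans hTG, Matrix.mul_one]
    exact ⟨(K * G) *ᵥ z, by
      rw [Matrix.mulVecLin_apply, Matrix.mulVec_mulVec, hWKG]⟩
  have hq_rep : ∀ q ∈ colSpace W, ∃ z : Fin d → ℝ, q = K *ᵥ z := by
    rintro q ⟨y, rfl⟩
    exact ⟨Kᵀ *ᵥ y, by rw [Matrix.mulVecLin_apply, ← hKW, ← Matrix.mulVec_mulVec]⟩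
  -- M := Kᵀ * Cp * K is positive definite
  have hMH : (Kᵀ * Cp * K).IsHermitian := by
    show (Kᵀ * Cp * K)ᴴ = Kᵀ * Cp * K
    rw [Matrix.conjTranspose_eq_transpose_of_trivial]
    simp only [Matrix.transpose_mul, Matrix.transpose_transpose, hCpT, Matrix.mul_assoc]
  have hq_pos : ∀ q : Fin v → ℝ, q ∈ colSpace W → q ≠ 0 → 0 < q ⬝ᵥ Cp *ᵥ q := by
    intro q hqW hq0
    have h0 : 0 ≤ q ⬝ᵥ Cp *ᵥ q := by simpa using hCpPSD.dotProduct_mulVec_nonneg q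
    rcases h0.lt_or_eq with h | h
    · exact h
    · exfalso
      have hz : Cp *ᵥ q = 0 := by
        have := (hCpPSD.dotProduct_mulVec_zero_iff q).mp (by simpa using h.symm)
        exact this
      obtain ⟨x, hx⟩ := hcol hqW
      rw [Matrix.mulVecLin_apply] at hx
      have hkey : C *ᵥ (Cp *ᵥ q) = q := by
        rw [← hx, Matrix.mulVec_mulVec, Matrix.mulVec_mulVec, hCp.1]
      rw [hz, Matrix.mulVec_zero] at hkey
      exact hq0 hkey.symm
  have hPD : (Kᵀ * Cp * K).PosDef := by
    refine Matrix.PosDef.of_dotProduct_mulVec_pos hMH (fun z hz => ?_)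
    have hqz0 : K *ᵥ z ≠ 0 := fun h => hz (hKinj z h)
    have hp := hq_pos (K *ᵥ z) (hKcol z) hqz0
    rw [dot_pull K Cp z] at hp
    simpa using hp
  -- attainment of sup and inf of eigenvalues
  obtain ⟨j₀, hj₀⟩ := Finite.exists_max hPD.1.eigenvalues
  have hs_eq : (⨆ i, hPD.1.eigenvalues i) = hPD.1.eigenvalues j₀ :=
    le_antisymm (ciSup_le hj₀) (le_ciSup (Set.Finite.bddAbove (Set.finite_range _)) j₀)
  have hs_pos : 0 < hPD.1.eigenvalues j₀ := hPD.eigenvalues_pos j₀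
  obtain ⟨i₀, hi₀⟩ := Finite.exists_min (Matrix.IsHermitian.inv hPD.1).eigenvalues
  have hμ_eq : (⨅ i, (Matrix.IsHermitian.inv hPD.1).eigenvalues i)
      = (Matrix.IsHermitian.inv hPD.1).eigenvalues i₀ :=
    le_antisymm (ciInf_le (Set.Finite.bddBelow (Set.finite_range _)) i₀) (le_ciInf hi₀)
  have hNPD : ((Kᵀ * Cp * K)⁻¹).PosDef := hPD.inv
  have hμ_pos : 0 < (Matrix.IsHermitian.inv hPD.1).eigenvalues i₀ := hNPD.eigenvalues_pos i₀
  have hdetM : IsUnit (Kᵀ * Cp * K).det := isUnit_iff_ne_zero.mpr hPD.det_pos.ne'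
  have hMN : (Kᵀ * Cp * K) * (Kᵀ * Cp * K)⁻¹ = 1 := Matrix.mul_nonsing_inv _ hdetM
  have hNM : (Kᵀ * Cp * K)⁻¹ * (Kᵀ * Cp * K) = 1 := Matrix.nonsing_inv_mul _ hdetM
  -- eigenvector for the largest eigenvalue of M
  set w : Fin d → ℝ := ⇑(hPD.1.eigenvectorBasis j₀) with hw
  have hw0 : w ≠ 0 := fun h =>
    hPD.1.eigenvectorBasis.orthonormal.ne_zero j₀ (by ext j; exact congrFun h j)
  have hwev : (Kᵀ * Cp * K) *ᵥ w = hPD.1.eigenvalues j₀ • w := hPD.1.mulVec_eigenvectorBasis j₀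
  refine ⟨hPD, ?_, ?_⟩
  · -- (⨅ eig (M⁻¹))⁻¹ = ⨆ eig M
    rw [hμ_eq, hs_eq]
    -- eigenvector of M⁻¹ for the smallest eigenvalue
    set u : Fin d → ℝ := ⇑((Matrix.IsHermitian.inv hPD.1).eigenvectorBasis i₀) with hu
    have hu0 : u ≠ 0 := fun h =>
      (Matrix.IsHermitian.inv hPD.1).eigenvectorBasis.orthonormal.ne_zero i₀
        (by ext j; exact congrFun h j)
    have huev : (Kᵀ * Cp * K)⁻¹ *ᵥ u = (Matrix.IsHermitian.inv hPD.1).eigenvalues i₀ • u :=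
      (Matrix.IsHermitian.inv hPD.1).mulVec_eigenvectorBasis i₀
    set μ : ℝ := (Matrix.IsHermitian.inv hPD.1).eigenvalues i₀ with hμ
    set s : ℝ := hPD.1.eigenvalues j₀ with hs
    have hMu : (Kᵀ * Cp * K) *ᵥ u = μ⁻¹ • u := by
      have h1 : (Kᵀ * Cp * K) *ᵥ ((Kᵀ * Cp * K)⁻¹ *ᵥ u) = u := by
        rw [Matrix.mulVec_mulVec, hMN, Matrix.one_mulVec]
      rw [huev, Matrix.mulVec_smul] at h1
      calc (Kᵀ * Cp * K) *ᵥ u = μ⁻¹ • (μ • ((Kᵀ * Cp * K) *ᵥ u)) := by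
            rw [smul_smul, inv_mul_cancel₀ hμ_pos.ne', one_smul]
        _ = μ⁻¹ • u := by rw [h1]
    have hNw : (Kᵀ * Cp * K)⁻¹ *ᵥ w = s⁻¹ • w := by
      have h1 : (Kᵀ * Cp * K)⁻¹ *ᵥ ((Kᵀ * Cp * K) *ᵥ w) = w := by
        rw [Matrix.mulVec_mulVec, hNM, Matrix.one_mulVec]
      rw [hwev, Matrix.mulVec_smul] at h1
      calc (Kᵀ * Cp * K)⁻¹ *ᵥ w = s⁻¹ • (s • ((Kᵀ * Cp * K)⁻¹ *ᵥ w)) := by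
            rw [smul_smul, inv_mul_cancel₀ hs_pos.ne', one_smul]
        _ = s⁻¹ • w := by rw [h1]
    have hupos : 0 < u ⬝ᵥ u := dp_self_pos hu0
    have hwpos : 0 < w ⬝ᵥ w := dp_self_pos hw0
    have hle1 : μ⁻¹ ≤ s := by
      have h2 := rayleigh_upper hPD.1 hj₀ u
      rw [hMu, dotProduct_smul, smul_eq_mul] at h2
      exact le_of_mul_le_mul_right h2 hupos
    have hle2 : μ ≤ s⁻¹ := by
      have h2 := rayleigh_lower (Matrix.IsHermitian.inv hPD.1) hi₀ w
      rw [hNw, dotProduct_smul, smul_eq_mul] at h2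
      exact le_of_mul_le_mul_right h2 hwpos
    have hle3 : s ≤ μ⁻¹ := by
      have h := mul_le_mul_of_nonneg_left hle2 hs_pos.le
      rw [mul_inv_cancel₀ hs_pos.ne'] at h
      calc s = s * (μ * μ⁻¹) := by rw [mul_inv_cancel₀ hμ_pos.ne', mul_one]
        _ = (s * μ) * μ⁻¹ := by ring
        _ ≤ 1 * μ⁻¹ := mul_le_mul_of_nonneg_right h (inv_nonneg.mpr hμ_pos.le)
        _ = μ⁻¹ := one_mul _
    exact le_antisymm hle1 hle3
  · -- IsGreatest
    rw [hs_eq]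
    constructor
    · -- membership: the eigenvector direction attains the value
      refine ⟨K *ᵥ w, hKcol w, fun h => hw0 (hKinj w h), ?_⟩
      have e1 : (K *ᵥ w) ⬝ᵥ Wp *ᵥ (K *ᵥ w) = w ⬝ᵥ w := by
        rw [dot_pull K Wp w, hKWpK, Matrix.one_mulVec]
      have e2 : (K *ᵥ w) ⬝ᵥ Cp *ᵥ (K *ᵥ w) = hPD.1.eigenvalues j₀ * (w ⬝ᵥ w) := by
        rw [dot_pull K Cp w, hwev, dotProduct_smul, smul_eq_mul]
      rw [e1, e2, mul_comm (hPD.1.eigenvalues j₀), ← mul_assoc,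
        inv_mul_cancel₀ (dp_self_pos hw0).ne', one_mul]
    · rintro x ⟨q, hqW, hq0, rfl⟩
      obtain ⟨z, hzq⟩ := hq_rep q hqW
      subst hzq
      have hz0 : z ≠ 0 := fun h => hq0 (by rw [h, Matrix.mulVec_zero])
      rw [dot_pull K Wp z, dot_pull K Cp z, hKWpK, Matrix.one_mulVec]
      have hray := rayleigh_upper hPD.1 hj₀ z
      have hzz : 0 < z ⬝ᵥ z := dp_self_pos hz0
      calc (z ⬝ᵥ z)⁻¹ * (z ⬝ᵥ (Kᵀ * Cp * K) *ᵥ z)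
          ≤ (z ⬝ᵥ z)⁻¹ * (hPD.1.eigenvalues j₀ * (z ⬝ᵥ z)) :=
            mul_le_mul_of_nonneg_left hray (inv_nonneg.mpr hzz.le)
        _ = hPD.1.eigenvalues j₀ := by
            rw [mul_comm (hPD.1.eigenvalues j₀), ← mul_assoc,
              inv_mul_cancel₀ hzz.ne', one_mul]
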